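/- Let P be a probability measure on a measurable space, M > 0, and f a measurable real-valued function with |f| ≤ M P-almost everywhere. Then M² · ∫ (exp(|f|/M) − 1 − |f|/M) dP ≤ (1/2) · 1.5 · ∫ f² dP; that is, (M, 1.5·∫ f² dP) is a Bernstein pair for f. -/

import Mathlib

open MeasureTheory

lemma exp_sub_le_of_le_one {t : ℝ} (h0 : 0 ≤ t) (h1 : t ≤ 1) :
    Real.exp t - 1 - t ≤ 0.75 * t ^ 2 := by
  have habs : |t| ≤ 1 := by rwa [abs_of_nonneg h0]
  have h := Real.exp_bound habs (n := 2) (by norm_num)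
  have hsum : ∑ m ∈ Finset.range 2, t ^ m / m.factorial = 1 + t := by
    simp [Finset.sum_range_succ]
  rw [hsum] at h
  have := (abs_le.1 h).2
  rw [abs_of_nonneg h0] at this
  norm_num [Nat.factorial] at this
  nlinarith

/-- if `|f| ≤ M` almost everywhere (with `M > 0`) for a probability
measure `P`, then `(M, 1.5·∫ f² dP)` is a Bernstein pair for `f`. -/
theorem bernstein_pair_of_bounded {α : Type*} [MeasurableSpace α]
    (P : Measure α) [IsProbabilityMeasure P]
    (M : ℝ) (hM : 0 < M) (f : α → ℝ) (hf : Measurable f)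
    (hbd : ∀ᵐ x ∂P, |f x| ≤ M) :
    M ^ 2 * ∫ x, (Real.exp (|f x| / M) - 1 - |f x| / M) ∂P ≤
      (1 / 2) * (1.5 * ∫ x, (f x) ^ 2 ∂P) := by
  have hg_meas : Measurable fun x => Real.exp (|f x| / M) - 1 - |f x| / M :=
    ((Real.measurable_exp.comp ((hf.abs).div_const M)).sub measurable_const).sub
      ((hf.abs).div_const M)
  have hgint : Integrable (fun x => Real.exp (|f x| / M) - 1 - |f x| / M) P := by
    refine Integrable.mono' (integrable_const (Real.exp 1 + 1 + 1)) hg_meas.aestronglyMeasurable ?_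
    filter_upwards [hbd] with x hx
    have ht0 : 0 ≤ |f x| / M := div_nonneg (abs_nonneg _) hM.le
    have ht1 : |f x| / M ≤ 1 := (div_le_one hM).2 hx
    have he : Real.exp (|f x| / M) ≤ Real.exp 1 := Real.exp_le_exp.2 ht1
    have he0 : 1 ≤ Real.exp (|f x| / M) := by
      simpa using Real.exp_le_exp.2 ht0
    rw [Real.norm_eq_abs, abs_le]
    constructor <;> nlinarith
  have hfint : Integrable (fun x => (f x) ^ 2) P := by
    refine Integrable.mono' (integrable_const (M ^ 2)) ((hf.pow_const 2).aestronglyMeasurable) ?_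
    filter_upwards [hbd] with x hx
    rw [Real.norm_eq_abs, abs_of_nonneg (sq_nonneg _)]
    calc (f x) ^ 2 = |f x| ^ 2 := (sq_abs _).symm
    _ ≤ M ^ 2 := by nlinarith [abs_nonneg (f x)]
  have key : M ^ 2 * ∫ x, (Real.exp (|f x| / M) - 1 - |f x| / M) ∂P
      = ∫ x, M ^ 2 * (Real.exp (|f x| / M) - 1 - |f x| / M) ∂P := (integral_const_mul _ _).symm
  have key2 : (1 / 2 : ℝ) * (1.5 * ∫ x, (f x) ^ 2 ∂P) = ∫ x, 0.75 * (f x) ^ 2 ∂P := by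
    rw [integral_const_mul]; ring
  rw [key, key2]
  refine integral_mono_ae (hgint.const_mul _) (hfint.const_mul _) ?_
  filter_upwards [hbd] with x hx
  have ht0 : 0 ≤ |f x| / M := div_nonneg (abs_nonneg _) hM.le
  have ht1 : |f x| / M ≤ 1 := (div_le_one hM).2 hx
  have h := exp_sub_le_of_le_one ht0 ht1
  have hsq : M ^ 2 * ((|f x| / M) ^ 2) = (f x) ^ 2 := by
    field_simp
    exact sq_abs _
  nlinarith [sq_nonneg M]
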